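/- Let N, M, c be positive integers and let Y ∈ {0,1}^{N×M} be a binary matrix in which every row contains at most c ones. Then there exist matrices H ∈ ℝ^{N×(2c+1)} and E ∈ ℝ^{M×(2c+1)} such that for every row i and every pair of columns j, j′ with Y_{ij} = 1 and Y_{ij′} = 0, one has (H Eᵀ)_{ij} > 0 > (H Eᵀ)_{ij′}. In particular, in every row all columns with Y-entry 1 receive strictly higher scores than all columns with Y-entry 0, so the factorization achieves perfect ranking reconstruction of Y. -/

import Mathlib

open Matrix Polynomial

/-- A binary matrix `Y ∈ {0,1}^{N×M}` with at most `c` ones per row admits a rank-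
`(2c+1)` factorization `H Eᵀ` achieving perfect ranking reconstruction: in every row,
all columns with `Y`-entry 1 receive positive scores and all columns with `Y`-entry 0
receive negative scores. -/
theorem exists_ranking_reconstruction_factorization
    (N M c : ℕ) (hN : 0 < N) (hM : 0 < M) (hc : 0 < c)
    (Y : Matrix (Fin N) (Fin M) ℝ)
    (hY01 : ∀ i j, Y i j = 0 ∨ Y i j = 1)
    (hrow : ∀ i, {j | Y i j = 1}.ncard ≤ c) :
    ∃ (H : Matrix (Fin N) (Fin (2 * c + 1)) ℝ) (E : Matrix (Fin M) (Fin (2 * c + 1)) ℝ),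
      ∀ i j j', Y i j = 1 → Y i j' = 0 →
        (H * Eᵀ) i j' < 0 ∧ 0 < (H * Eᵀ) i j := by
  classical
  set S : Fin N → Finset (Fin M) := fun i => Finset.univ.filter (fun j => Y i j = 1) with hS
  have hScard : ∀ i, (S i).card ≤ c := by
    intro i
    have hset : {j | Y i j = 1} = ↑(S i) := by ext j; simp [hS]
    have h := hrow i
    rwa [hset, Set.ncard_coe_finset] at h
  set f : Fin N → Fin M → ℝ := fun i j' => ∏ j ∈ S i, ((j'.val : ℝ) - (j.val : ℝ))^2 with hf
  set T : Fin N → Finset ℝ := fun i => insert (1:ℝ) (((S i)ᶜ).image (f i)) with hT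
  have hTne : ∀ i, (T i).Nonempty := fun i => ⟨1, by simp [hT]⟩
  set ε : Fin N → ℝ := fun i => (T i).min' (hTne i) / 2 with hε
  -- f is positive outside S i
  have hfpos : ∀ i j', j' ∉ S i → 0 < f i j' := by
    intro i j' hj'
    apply Finset.prod_pos
    intro j hj
    have : j ≠ j' := fun h => hj' (h ▸ hj)
    have hne : (j'.val : ℝ) ≠ (j.val : ℝ) := by
      intro h
      exact this (Fin.ext (by exact_mod_cast h)).symm
    have := sub_ne_zero_of_ne hne
    positivity
  have hεpos : ∀ i, 0 < ε i := by
    intro i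
    have : 0 < (T i).min' (hTne i) := by
      rw [Finset.lt_min'_iff]
      intro b hb
      rcases Finset.mem_insert.mp hb with h | h
      · simp [h]
      · rcases Finset.mem_image.mp h with ⟨j', hj', rfl⟩
        exact hfpos i j' (Finset.mem_compl.mp hj')
    show 0 < (T i).min' (hTne i) / 2
    linarith
  have hεle : ∀ i j', j' ∉ S i → ε i ≤ f i j' / 2 := by
    intro i j' hj'
    have : (T i).min' (hTne i) ≤ f i j' :=
      Finset.min'_le _ _ (Finset.mem_insert_of_mem
        (Finset.mem_image_of_mem _ (Finset.mem_compl.mpr hj')))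
    show (T i).min' (hTne i) / 2 ≤ _
    linarith
  set p : Fin N → Polynomial ℝ :=
    fun i => C (ε i) - ∏ j ∈ S i, (X - C (j.val : ℝ))^2 with hp
  have hdeg : ∀ i, (p i).natDegree < 2 * c + 1 := by
    intro i
    have h1 : (∏ j ∈ S i, (X - C ((j.val : ℝ)))^2).natDegree ≤ 2 * c := by
      refine le_trans (Polynomial.natDegree_prod_le _ _) ?_
      calc ∑ j ∈ S i, ((X - C ((j.val : ℝ)))^2).natDegree
          ≤ ∑ _j ∈ S i, 2 := by
            refine Finset.sum_le_sum fun j _ => ?_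
            rw [Polynomial.natDegree_pow, Polynomial.natDegree_X_sub_C]
        _ = 2 * (S i).card := by rw [Finset.sum_const]; ring
        _ ≤ 2 * c := by have := hScard i; omega
    have h2 : (p i).natDegree ≤ 2 * c := by
      refine le_trans (Polynomial.natDegree_sub_le _ _)
        (max_le (by simp [Polynomial.natDegree_C]) h1)
    omega
  have heval : ∀ i (x : ℝ), (p i).eval x = ε i - ∏ j ∈ S i, (x - (j.val : ℝ))^2 := by
    intro i x
    simp [hp, Polynomial.eval_prod]
  set H : Matrix (Fin N) (Fin (2 * c + 1)) ℝ := fun i k => (p i).coeff k with hH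
  set E : Matrix (Fin M) (Fin (2 * c + 1)) ℝ := fun j k => ((j.val : ℝ))^(k : ℕ) with hE
  have hscore : ∀ i j, (H * Eᵀ) i j = (p i).eval ((j.val : ℝ)) := by
    intro i j
    rw [Matrix.mul_apply]
    simp only [Matrix.transpose_apply]
    simp only [Matrix.mul_apply, Matrix.transpose_apply, hH, hE]
    rw [Polynomial.eval_eq_sum_range' (hdeg i),
      ← Fin.sum_univ_eq_sum_range (fun k => (p i).coeff k * ((j.val : ℝ))^k)]
  refine ⟨H, E, ?_⟩
  intro i j j' hj1 hj0
  have hjS : j ∈ S i := by simp [hS, hj1]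
  have hj'S : j' ∉ S i := by simp [hS, hj0]
  constructor
  · rw [hscore i j', heval]
    have hle := hεle i j' hj'S
    have hpos := hfpos i j' hj'S
    simp only [hf] at hle hpos
    linarith
  · rw [hscore i j, heval]
    have : ∏ jj ∈ S i, (((j.val : ℝ)) - (jj.val : ℝ))^2 = 0 :=
      Finset.prod_eq_zero hjS (by simp)
    rw [this]
    simpa using hεpos i
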